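/- Let U be a unitary on (ℂ²)^{⊗n} with Pauli coefficients α_s, and suppose Ũ is an operator with ‖U − Ũ‖_{2,P}² ≤ ε/4 and ‖Ũ‖_{1,P} = L₁. Let S' = {s : |α̃_s| ≥ ε/(4L₁)} where α̃_s are the Pauli coefficients of Ũ, and V = Σ_{s∈S'} α̃_s σ^s. Then |S'| ≤ 4L₁²/ε, ‖Ũ − V‖_{2,P}² ≤ ε/4, and ‖U − V‖_{2,P}² ≤ ε. -/

import Mathlib

open Matrix BigOperators
open scoped Kronecker ComplexOrder

noncomputable def pauli1 : Fin 4 → Matrix (Fin 2) (Fin 2) ℂ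
  | 0 => 1
  | 1 => !![0, 1; 1, 0]
  | 2 => !![0, -Complex.I; Complex.I, 0]
  | 3 => !![1, 0; 0, -1]

/-- The n-qubit Pauli operator indexed by `s : Fin n → Fin 4`, realized as the
tensor product of single-qubit Pauli matrices (entrywise product formula). -/
noncomputable def pauli {n : ℕ} (s : Fin n → Fin 4) :
    Matrix (Fin n → Fin 2) (Fin n → Fin 2) ℂ :=
  Matrix.of fun i j => ∏ k, pauli1 (s k) (i k) (j k)

/-- The Pauli coefficient `α_s = 2^{-n} Tr(A σ^s)`. -/
noncomputable def pauliCoeff {n : ℕ} (A : Matrix (Fin n → Fin 2) (Fin n → Fin 2) ℂ)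
    (s : Fin n → Fin 4) : ℂ :=
  (A * pauli s).trace / 2 ^ n

/-- Operator norm (largest singular value) of a matrix. -/
noncomputable def opNorm {m : Type*} [Fintype m] [DecidableEq m]
    (A : Matrix m m ℂ) : ℝ :=
  ‖Matrix.toEuclideanCLM (𝕜 := ℂ) A‖

/-- Trace norm `‖A‖₁ = Tr √(AᴴA)`. -/
noncomputable def traceNorm {m : Type*} [Fintype m] [DecidableEq m]
    (A : Matrix m m ℂ) : ℝ :=
  ((((Matrix.posSemidef_conjTranspose_mul_self A).1.eigenvectorUnitary : Matrix m m ℂ) *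
      diagonal (((↑) : ℝ → ℂ) ∘ Real.sqrt ∘ (Matrix.posSemidef_conjTranspose_mul_self A).1.eigenvalues) *
      (star (Matrix.posSemidef_conjTranspose_mul_self A).1.eigenvectorUnitary : Matrix m m ℂ)).trace).re

lemma pauli1_orth (a b : Fin 4) :
    ∑ p : Fin 2 × Fin 2, pauli1 a p.1 p.2 * pauli1 b p.2 p.1
      = if a = b then 2 else 0 := by
  fin_cases a <;> fin_cases b <;>
    simp [pauli1, Fintype.sum_prod_type, Fin.sum_univ_two, Matrix.one_apply,
      Complex.ext_iff] <;> norm_num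

lemma pauli_trace_orth {n : ℕ} (t s : Fin n → Fin 4) :
    (pauli t * pauli s).trace = if t = s then (2 : ℂ) ^ n else 0 := by
  have key : (pauli t * pauli s).trace
      = ∏ k, ∑ p : Fin 2 × Fin 2, pauli1 (t k) p.1 p.2 * pauli1 (s k) p.2 p.1 := by
    rw [Matrix.trace, Fintype.prod_sum]
    rw [show (∑ x : Fin n → Fin 2 × Fin 2,
        ∏ k, pauli1 (t k) (x k).1 (x k).2 * pauli1 (s k) (x k).2 (x k).1)
      = ∑ q : (Fin n → Fin 2) × (Fin n → Fin 2),
        ∏ k, pauli1 (t k) (q.1 k) (q.2 k) * pauli1 (s k) (q.2 k) (q.1 k) from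
      Fintype.sum_equiv (Equiv.arrowProdEquivProdArrow _ _ _) _ _ (fun x => rfl)]
    rw [Fintype.sum_prod_type]
    refine Finset.sum_congr rfl fun i _ => ?_
    simp only [Matrix.diag_apply, Matrix.mul_apply, pauli, Matrix.of_apply]
    refine Finset.sum_congr rfl fun m _ => ?_
    rw [← Finset.prod_mul_distrib]
  rw [key]
  by_cases h : t = s
  · subst h
    simp [pauli1_orth, Finset.prod_const]
  · obtain ⟨k, hk⟩ : ∃ k, t k ≠ s k := by
      by_contra hc
      push_neg at hc
      exact h (funext hc)
    rw [if_neg h]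
    exact Finset.prod_eq_zero (Finset.mem_univ k) (by rw [pauli1_orth, if_neg hk])

lemma pauliCoeff_pauli {n : ℕ} (t s : Fin n → Fin 4) :
    pauliCoeff (pauli t) s = if t = s then 1 else 0 := by
  rw [pauliCoeff, pauli_trace_orth]
  split <;> simp [div_self, pow_ne_zero]

lemma pauliCoeff_sub {n : ℕ} (A B : Matrix (Fin n → Fin 2) (Fin n → Fin 2) ℂ)
    (s : Fin n → Fin 4) :
    pauliCoeff (A - B) s = pauliCoeff A s - pauliCoeff B s := by
  simp [pauliCoeff, Matrix.sub_mul, sub_div]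

/-- Thresholding the Pauli coefficients of an ℓ1-bounded
approximant `Ũ` of a unitary `U` yields a `4L₁²/ε`-sparse operator `V` with
`‖Ũ − V‖_{2,P}² ≤ ε/4` and `‖U − V‖_{2,P}² ≤ ε`. -/
theorem threshold_sparse_approx (n : ℕ)
    (U Ut : Matrix (Fin n → Fin 2) (Fin n → Fin 2) ℂ)
    (hU : U ∈ Matrix.unitaryGroup (Fin n → Fin 2) ℂ)
    (ε L₁ : ℝ) (hε : 0 < ε) (hL : 0 < L₁)
    (h2 : ∑ s : Fin n → Fin 4, ‖pauliCoeff (U - Ut) s‖ ^ 2 ≤ ε / 4)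
    (h1 : ∑ s : Fin n → Fin 4, ‖pauliCoeff Ut s‖ = L₁) :
    ∀ (S' : Finset (Fin n → Fin 4)),
      S' = Finset.univ.filter
          (fun s : Fin n → Fin 4 => ε / (4 * L₁) ≤ ‖pauliCoeff Ut s‖) →
      ∀ (V : Matrix (Fin n → Fin 2) (Fin n → Fin 2) ℂ),
        V = ∑ s ∈ S', pauliCoeff Ut s • pauli s →
        ((S'.card : ℝ) ≤ 4 * L₁ ^ 2 / ε) ∧
        (∑ s : Fin n → Fin 4, ‖pauliCoeff (Ut - V) s‖ ^ 2 ≤ ε / 4) ∧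
        (∑ s : Fin n → Fin 4, ‖pauliCoeff (U - V) s‖ ^ 2 ≤ ε) := by
  intro S' hS' V hV
  set τ := ε / (4 * L₁) with hτdef
  have hτ : 0 < τ := div_pos hε (by linarith)
  -- Pauli coefficients of V
  have hcV : ∀ s, pauliCoeff V s = if s ∈ S' then pauliCoeff Ut s else 0 := by
    intro s
    have h0 : pauliCoeff V s
        = ∑ t ∈ S', pauliCoeff Ut t * pauliCoeff (pauli t) s := by
      simp [hV, pauliCoeff, Finset.sum_mul, Matrix.smul_mul, Matrix.trace_sum,
        Matrix.trace_smul, Finset.sum_div, mul_div_assoc, smul_eq_mul]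
    simp [h0, pauliCoeff_pauli, mul_ite, Finset.sum_ite_eq']
  -- Pauli coefficients of Ut - V
  have hc : ∀ s, pauliCoeff (Ut - V) s = if s ∈ S' then 0 else pauliCoeff Ut s := by
    intro s
    rw [pauliCoeff_sub, hcV]
    split <;> simp
  -- small coefficients off S'
  have hsmall : ∀ s ∉ S', ‖pauliCoeff Ut s‖ ≤ τ := by
    intro s hs
    rw [hS', Finset.mem_filter] at hs
    push_neg at hs
    exact le_of_lt (hs (Finset.mem_univ s))
  have hbig : ∀ s ∈ S', τ ≤ ‖pauliCoeff Ut s‖ := by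
    intro s hs
    rw [hS', Finset.mem_filter] at hs
    exact hs.2
  -- partial sum bound
  have hpartial : ∑ s ∈ S', ‖pauliCoeff Ut s‖ ≤ L₁ := by
    rw [← h1]
    exact Finset.sum_le_sum_of_subset_of_nonneg (Finset.subset_univ _)
      (fun s _ _ => norm_nonneg _)
  -- card bound
  have hcard : (S'.card : ℝ) ≤ 4 * L₁ ^ 2 / ε := by
    have h3 : (S'.card : ℝ) * τ ≤ ∑ s ∈ S', ‖pauliCoeff Ut s‖ := by
      calc (S'.card : ℝ) * τ = ∑ _s ∈ S', τ := by rw [Finset.sum_const, nsmul_eq_mul]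
      _ ≤ _ := Finset.sum_le_sum hbig
    have h4 : (S'.card : ℝ) * τ ≤ L₁ := h3.trans hpartial
    rw [hτdef] at h4
    rw [le_div_iff₀ hε]
    have h5 : (S'.card : ℝ) * (ε / (4 * L₁)) * (4 * L₁) ≤ L₁ * (4 * L₁) :=
      mul_le_mul_of_nonneg_right h4 (by linarith)
    have h6 : ε / (4 * L₁) * (4 * L₁) = ε := div_mul_cancel₀ ε (by positivity)
    nlinarith [h5]
  refine ⟨hcard, ?_, ?_⟩
  · -- second claim
    have step : ∀ s : Fin n → Fin 4,
        ‖pauliCoeff (Ut - V) s‖ ^ 2 ≤ τ * ‖pauliCoeff Ut s‖ := by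
      intro s
      rw [hc]
      split
      · simpa using mul_nonneg hτ.le (norm_nonneg _)
      · next hs =>
          have h7 := hsmall s hs
          have h8 := norm_nonneg (pauliCoeff Ut s)
          nlinarith
    calc ∑ s : Fin n → Fin 4, ‖pauliCoeff (Ut - V) s‖ ^ 2
        ≤ ∑ s : Fin n → Fin 4, τ * ‖pauliCoeff Ut s‖ :=
          Finset.sum_le_sum fun s _ => step s
      _ = τ * L₁ := by rw [← Finset.mul_sum, h1]
      _ = ε / 4 := by
          rw [hτdef]; field_simp
  · -- third claim
    have h2' : ∑ s : Fin n → Fin 4, ‖pauliCoeff (Ut - V) s‖ ^ 2 ≤ ε / 4 := by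
      have step : ∀ s : Fin n → Fin 4,
          ‖pauliCoeff (Ut - V) s‖ ^ 2 ≤ τ * ‖pauliCoeff Ut s‖ := by
        intro s
        rw [hc]
        split
        · simpa using mul_nonneg hτ.le (norm_nonneg _)
        · next hs =>
            have h7 := hsmall s hs
            have h8 := norm_nonneg (pauliCoeff Ut s)
            nlinarith
      calc ∑ s : Fin n → Fin 4, ‖pauliCoeff (Ut - V) s‖ ^ 2
          ≤ ∑ s : Fin n → Fin 4, τ * ‖pauliCoeff Ut s‖ :=
            Finset.sum_le_sum fun s _ => step s
        _ = τ * L₁ := by rw [← Finset.mul_sum, h1]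
        _ = ε / 4 := by rw [hτdef]; field_simp
    have ptwise : ∀ s : Fin n → Fin 4,
        ‖pauliCoeff (U - V) s‖ ^ 2
          ≤ 2 * ‖pauliCoeff (U - Ut) s‖ ^ 2
            + 2 * ‖pauliCoeff (Ut - V) s‖ ^ 2 := by
      intro s
      have hdecomp : pauliCoeff (U - V) s
          = pauliCoeff (U - Ut) s + pauliCoeff (Ut - V) s := by
        rw [pauliCoeff_sub, pauliCoeff_sub, pauliCoeff_sub]; ring
      rw [hdecomp]
      have htri := norm_add_le (pauliCoeff (U - Ut) s) (pauliCoeff (Ut - V) s)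
      have ha := norm_nonneg (pauliCoeff (U - Ut) s)
      have hb := norm_nonneg (pauliCoeff (Ut - V) s)
      have hab := norm_nonneg (pauliCoeff (U - Ut) s + pauliCoeff (Ut - V) s)
      have hsq : ‖pauliCoeff (U - Ut) s + pauliCoeff (Ut - V) s‖ ^ 2
          ≤ (‖pauliCoeff (U - Ut) s‖ + ‖pauliCoeff (Ut - V) s‖) ^ 2 :=
        pow_le_pow_left₀ hab htri 2
      nlinarith [sq_nonneg (‖pauliCoeff (U - Ut) s‖
        - ‖pauliCoeff (Ut - V) s‖)]
    calc ∑ s : Fin n → Fin 4, ‖pauliCoeff (U - V) s‖ ^ 2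
        ≤ ∑ s : Fin n → Fin 4,
            (2 * ‖pauliCoeff (U - Ut) s‖ ^ 2
              + 2 * ‖pauliCoeff (Ut - V) s‖ ^ 2) :=
          Finset.sum_le_sum fun s _ => ptwise s
      _ = 2 * (∑ s : Fin n → Fin 4, ‖pauliCoeff (U - Ut) s‖ ^ 2)
          + 2 * (∑ s : Fin n → Fin 4, ‖pauliCoeff (Ut - V) s‖ ^ 2) := by
          rw [Finset.sum_add_distrib, Finset.mul_sum, Finset.mul_sum]
      _ ≤ 2 * (ε / 4) + 2 * (ε / 4) := by
          have := mul_le_mul_of_nonneg_left h2 (by norm_num : (0:ℝ) ≤ 2)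
          have := mul_le_mul_of_nonneg_left h2' (by norm_num : (0:ℝ) ≤ 2)
          linarith
      _ = ε := by ring
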